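/- Let M > 1 be a real number and let k ≥ 0 be an integer. Then the minimum over all real polynomials p with deg p ≤ k and p(0) = 1 of sup_{x ∈ [1, M]} |p(x)| equals 1 / T_k((M+1)/(M−1)), where T_k is the degree-k Chebyshev polynomial of the first kind; moreover the minimum is attained (by a suitably scaled and shifted Chebyshev polynomial). This quantity is the worst-case residual of the minimal residual algorithm after k steps on the class of symmetric positive definite matrices with condition number at most M. -/

import Mathlib

open Polynomial Polynomial.Chebyshev Real Set

lemma natDegree_T_le (n : ℕ) : (T ℝ (n : ℤ)).natDegree ≤ n := by
  induction n using Nat.strong_induction_on with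
  | _ n ih =>
    match n with
    | 0 => simp [T_zero]
    | 1 => simp [T_one]
    | (m + 2) =>
      have h : ((m : ℤ) + 2) = ((m + 2 : ℕ) : ℤ) := by push_cast; ring
      rw [← h, T_add_two]
      refine (natDegree_sub_le _ _).trans ?_
      have h1 : (2 * X * T ℝ ((m : ℤ) + 1)).natDegree ≤ m + 2 := by
        refine (natDegree_mul_le).trans ?_
        have h2 : (2 * X : ℝ[X]).natDegree ≤ 1 := natDegree_mul_le.trans (by simp)
        have h3 : (T ℝ ((m : ℤ) + 1)).natDegree ≤ m + 1 := by
          have := ih (m + 1) (by omega)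
          simpa [Nat.cast_add] using this
        omega
      have h4 : (T ℝ (m : ℤ)).natDegree ≤ m := ih m (by omega)
      simp only [max_le_iff]
      exact ⟨h1, by omega⟩

lemma one_le_T_eval {x : ℝ} (hx : 1 ≤ x) (n : ℕ) :
    1 ≤ (T ℝ (n : ℤ)).eval x ∧ (T ℝ (n : ℤ)).eval x ≤ (T ℝ ((n : ℤ) + 1)).eval x := by
  induction n with
  | zero => simp [T_zero, T_one]; linarith
  | succ m ih =>
    obtain ⟨h1, h2⟩ := ih
    have key : (T ℝ ((m : ℤ) + 2)).eval x
        = 2 * x * (T ℝ ((m : ℤ) + 1)).eval x - (T ℝ (m : ℤ)).eval x := by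
      rw [T_add_two]; simp
    constructor
    · push_cast; linarith
    · push_cast
      have h5 : ((m : ℤ) + 1 + 1) = ((m : ℤ) + 2) := by ring
      rw [h5, key]
      nlinarith

lemma abs_T_le_one {y : ℝ} (h1 : -1 ≤ y) (h2 : y ≤ 1) (n : ℕ) :
    |(T ℝ (n : ℤ)).eval y| ≤ 1 := by
  have := Real.cos_arccos h1 h2
  rw [← this, T_real_cos]
  exact Real.abs_cos_le_one _

lemma exists_root_Ioo (q : Polynomial ℝ) {a b : ℝ} (hab : a < b)
    (h : q.eval a * q.eval b < 0) : ∃ c ∈ Set.Ioo a b, q.eval c = 0 := by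
  have hc : ContinuousOn (fun x => q.eval x) (Set.Icc a b) := (q.continuous).continuousOn
  rcases mul_neg_iff.mp h with ⟨ha, hb⟩ | ⟨ha, hb⟩
  · obtain ⟨c, hc1, hc2⟩ := intermediate_value_Ioo' hab.le hc
      (by constructor <;> assumption : (0:ℝ) ∈ Set.Ioo (q.eval b) (q.eval a))
    exact ⟨c, hc1, hc2⟩
  · obtain ⟨c, hc1, hc2⟩ := intermediate_value_Ioo hab.le hc
      (by constructor <;> assumption : (0:ℝ) ∈ Set.Ioo (q.eval a) (q.eval b))
    exact ⟨c, hc1, hc2⟩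

set_option maxHeartbeats 2000000 in
theorem stmt_11 (M : ℝ) (hM : 1 < M) (k : ℕ) :
    IsLeast
      {e : ℝ | ∃ p : Polynomial ℝ, p.natDegree ≤ k ∧ p.eval 0 = 1 ∧
        e = ⨆ x : Set.Icc (1 : ℝ) M, |p.eval (x : ℝ)|}
      (1 / (Polynomial.Chebyshev.T ℝ k).eval ((M + 1) / (M - 1))) := by
  have hM0 : (0:ℝ) < M - 1 := by linarith
  have hγ : 1 ≤ (M + 1) / (M - 1) := by rw [le_div_iff₀ hM0]; linarith
  set t : ℝ := (T ℝ (k:ℤ)).eval ((M + 1) / (M - 1)) with htdef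
  have ht : 1 ≤ t := (one_le_T_eval hγ k).1
  have ht0 : 0 < t := lt_of_lt_of_le zero_lt_one ht
  have hne : Nonempty (Set.Icc (1:ℝ) M) := ⟨⟨1, by simp [Set.mem_Icc, hM.le]⟩⟩
  set lp : Polynomial ℝ := Polynomial.C ((M+1)/(M-1)) - Polynomial.C (2/(M-1)) * Polynomial.X
    with hlp
  have hleval : ∀ x : ℝ, lp.eval x = (M + 1 - 2*x) / (M - 1) := by
    intro x; simp only [hlp, eval_sub, eval_mul, eval_C, eval_X]
    field_simp
  set p₀ : Polynomial ℝ := Polynomial.C t⁻¹ * ((T ℝ (k:ℤ)).comp lp) with hp₀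
  have hp₀eval : ∀ x : ℝ, p₀.eval x = t⁻¹ * (T ℝ (k:ℤ)).eval (lp.eval x) := by
    intro x; simp [hp₀, eval_comp]
  have hl0 : lp.eval 0 = (M+1)/(M-1) := by rw [hleval]; ring_nf
  have hp₀0 : p₀.eval 0 = 1 := by
    rw [hp₀eval, hl0, ← htdef]; field_simp
  have hp₀deg : p₀.natDegree ≤ k := by
    refine natDegree_mul_le.trans ?_
    have h1 : lp.natDegree ≤ 1 := by
      refine (natDegree_sub_le _ _).trans ?_
      simp only [max_le_iff]
      exact ⟨by simp, natDegree_mul_le.trans (by simp)⟩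
    have h2 : ((T ℝ (k:ℤ)).comp lp).natDegree ≤ k * 1 :=
      natDegree_comp_le.trans (Nat.mul_le_mul (natDegree_T_le k) h1)
    simp only [natDegree_C, zero_add]
    omega
  have hT1 : (T ℝ (k:ℤ)).eval 1 = 1 := by
    have := T_real_cos 0 (k:ℤ)
    simpa using this
  have hlmem : ∀ x ∈ Set.Icc (1:ℝ) M, -1 ≤ lp.eval x ∧ lp.eval x ≤ 1 := by
    intro x hx
    obtain ⟨h1, h2⟩ := hx
    rw [hleval]
    constructor
    · rw [le_div_iff₀ hM0]; linarith
    · rw [div_le_one hM0]; linarith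
  have hbound : ∀ x ∈ Set.Icc (1:ℝ) M, |p₀.eval x| ≤ 1 / t := by
    intro x hx
    obtain ⟨h1, h2⟩ := hlmem x hx
    rw [hp₀eval, abs_mul, abs_of_pos (inv_pos.mpr ht0), one_div]
    calc t⁻¹ * |(T ℝ (k:ℤ)).eval (lp.eval x)| ≤ t⁻¹ * 1 := by
          have := abs_T_le_one h1 h2 k
          exact mul_le_mul_of_nonneg_left this (inv_pos.mpr ht0).le
      _ = t⁻¹ := mul_one _
  have hl1 : lp.eval 1 = 1 := by rw [hleval]; field_simp; ring
  have hp₀1 : p₀.eval 1 = 1 / t := by rw [hp₀eval, hl1, hT1, mul_one, one_div]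
  constructor
  · refine ⟨p₀, hp₀deg, hp₀0, ?_⟩
    refine le_antisymm ?_ ?_
    · have hbdd : BddAbove (Set.range fun x : Set.Icc (1:ℝ) M => |p₀.eval (x:ℝ)|) := by
        refine ⟨1/t, ?_⟩
        rintro y ⟨x, rfl⟩
        exact hbound x x.2
      have h := le_ciSup hbdd (⟨1, by simp [Set.mem_Icc, hM.le]⟩ : Set.Icc (1:ℝ) M)
      simp only [hp₀1] at h
      calc 1/t = |1/t| := (abs_of_pos (by positivity)).symm
        _ ≤ _ := h
    · exact ciSup_le fun x => hbound x x.2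
  · rintro e ⟨p, hdeg, hp0, rfl⟩
    set S : ℝ := ⨆ x : Set.Icc (1:ℝ) M, |p.eval (x:ℝ)| with hS
    have hbddp : BddAbove (Set.range fun x : Set.Icc (1:ℝ) M => |p.eval (x:ℝ)|) := by
      have h1 : BddAbove ((fun x => |p.eval x|) '' Set.Icc 1 M) :=
        (isCompact_Icc.image (p.continuous.abs)).bddAbove
      rwa [Set.image_eq_range] at h1
    have hle : ∀ x ∈ Set.Icc (1:ℝ) M, |p.eval x| ≤ S := fun x hx => le_ciSup hbddp ⟨x, hx⟩
    by_contra hcon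
    push_neg at hcon
    rcases Nat.eq_zero_or_pos k with hk0 | hk
    · subst hk0
      have hpc : p = Polynomial.C (p.coeff 0) := Polynomial.eq_C_of_natDegree_le_zero hdeg
      have hc1 : p.coeff 0 = 1 := by rw [hpc] at hp0; simpa using hp0
      have h1 : |p.eval 1| = 1 := by rw [hpc, hc1]; simp
      have h2 := hle 1 (by simp [Set.mem_Icc, hM.le])
      have h3 : t = 1 := by rw [htdef]; simp [T_zero]
      rw [h3] at hcon
      rw [h1] at h2
      linarith
    · set u : ℕ → ℝ := fun j => (M + 1 - (M - 1) * Real.cos (j * π / k)) / 2 with hu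
      have hkR : (0:ℝ) < k := by exact_mod_cast hk
      have humem : ∀ j : ℕ, u j ∈ Set.Icc (1:ℝ) M := by
        intro j
        have c1 := Real.neg_one_le_cos (j * π / k)
        have c2 := Real.cos_le_one (j * π / k)
        constructor
        · rw [hu]; dsimp only; nlinarith
        · rw [hu]; dsimp only; nlinarith
      have hleval' : ∀ j : ℕ, lp.eval (u j) = Real.cos (j * π / k) := by
        intro j; rw [hleval, hu]; dsimp only; field_simp; ring
      have hval : ∀ j : ℕ, p₀.eval (u j) = t⁻¹ * (-1)^j := by
        intro j
        have harg : ((k:ℤ):ℝ) * ((j:ℝ) * π / k) = 0 + (j:ℝ) * π := by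
          push_cast; field_simp; ring
        rw [hp₀eval, hleval', T_real_cos, harg]
        rw [Real.cos_add_nat_mul_pi 0 j]
        norm_num
      set q : Polynomial ℝ := p₀ - p with hqdef
      have hqdeg : q.natDegree ≤ k := (natDegree_sub_le _ _).trans (max_le hp₀deg hdeg)
      have hq0 : q.eval 0 = 0 := by simp [hqdef, hp₀0, hp0]
      have hsq : ∀ j : ℕ, ((-1:ℝ)^j) * ((-1:ℝ)^j) = 1 := by
        intro j; rw [← pow_add, ← two_mul, pow_mul]; norm_num
      have hsign : ∀ j : ℕ, 0 < (-1:ℝ)^j * q.eval (u j) := by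
        intro j
        have h1 := hle (u j) (humem j)
        have h2 : (-1:ℝ)^j * p.eval (u j) ≤ |p.eval (u j)| := by
          calc (-1:ℝ)^j * p.eval (u j) ≤ |(-1:ℝ)^j * p.eval (u j)| := le_abs_self _
            _ = |p.eval (u j)| := by
                rw [abs_mul, abs_pow, abs_neg, abs_one, one_pow, one_mul]
        have h3 : q.eval (u j) = t⁻¹ * (-1)^j - p.eval (u j) := by
          simp [hqdef, hval j]
        have h4 : (-1:ℝ)^j * q.eval (u j) = t⁻¹ - (-1)^j * p.eval (u j) := by
          rw [h3, mul_sub]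
          congr 1
          calc (-1:ℝ)^j * (t⁻¹ * (-1)^j) = t⁻¹ * ((-1:ℝ)^j * (-1:ℝ)^j) := by ring
            _ = t⁻¹ := by rw [hsq j, mul_one]
        have h5 : t⁻¹ = 1/t := (one_div t).symm
        rw [h4]
        linarith [h2.trans h1]
      have humono : ∀ i j : ℕ, i < j → j ≤ k → u i < u j := by
        intro i j hij hjk
        have hπ := Real.pi_pos
        have hiR : (i:ℝ) < (j:ℝ) := by exact_mod_cast hij
        have hjR : (j:ℝ) ≤ (k:ℝ) := by exact_mod_cast hjk
        have ha : (i:ℝ) * π / k ∈ Set.Icc 0 π := by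
          constructor
          · positivity
          · rw [div_le_iff₀ hkR]; nlinarith
        have hb : (j:ℝ) * π / k ∈ Set.Icc 0 π := by
          constructor
          · positivity
          · rw [div_le_iff₀ hkR]; nlinarith
        have hlt : (i:ℝ) * π / k < (j:ℝ) * π / k := by
          rw [div_lt_div_iff₀ hkR hkR]
          nlinarith [mul_pos (mul_pos (sub_pos.mpr hiR) Real.pi_pos) hkR]
        have hcc := Real.strictAntiOn_cos ha hb hlt
        rw [hu]; dsimp only; nlinarith
      have humono' : ∀ i j : ℕ, i ≤ j → j ≤ k → u i ≤ u j := by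
        intro i j hij hjk
        rcases eq_or_lt_of_le hij with rfl | h
        · exact le_refl _
        · exact (humono i j h hjk).le
      have hroot : ∀ j : Fin k, ∃ c, c ∈ Set.Ioo (u j) (u (j+1)) ∧ q.eval c = 0 := by
        intro j
        have hjk : (j:ℕ) + 1 ≤ k := j.2
        have hmul : q.eval (u j) * q.eval (u ((j:ℕ)+1)) < 0 := by
          have s1 := hsign j
          have s2 := hsign ((j:ℕ)+1)
          have hp1 : (-1:ℝ)^((j:ℕ)+1) = -(-1:ℝ)^(j:ℕ) := by rw [pow_succ]; ring
          rw [hp1] at s2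
          nlinarith [hsq (j:ℕ), mul_pos s1 s2]
        obtain ⟨c, hc1, hc2⟩ := exists_root_Ioo q (humono j ((j:ℕ)+1) (by omega) hjk) hmul
        exact ⟨c, hc1, hc2⟩
      choose r hrm hrz using hroot
      have hrmono : StrictMono r := by
        intro i j hij
        have h1 : r i < u ((i:ℕ)+1) := (hrm i).2
        have h3 : u (j:ℕ) < r j := (hrm j).1
        have h2 : u ((i:ℕ)+1) ≤ u (j:ℕ) := humono' _ _ (by omega) (by omega)
        linarith
      classical
      set s : Finset ℝ := insert 0 (Finset.image r Finset.univ) with hs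
      have h0notin : (0:ℝ) ∉ Finset.image r Finset.univ := by
        simp only [Finset.mem_image, Finset.mem_univ, true_and, not_exists]
        intro j hj
        have hu1 : 1 ≤ u (j:ℕ) := (humem (j:ℕ)).1
        have := (hrm j).1
        rw [hj] at this
        linarith
      have hcard : s.card = k + 1 := by
        rw [hs, Finset.card_insert_of_notMem h0notin,
          Finset.card_image_of_injective _ hrmono.injective, Finset.card_univ,
          Fintype.card_fin]
      have hqz : q = 0 := by
        apply Polynomial.eq_zero_of_natDegree_lt_card_of_eval_eq_zero' q s
        · intro x hx
          rw [hs] at hx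
          rcases Finset.mem_insert.mp hx with rfl | hx
          · exact hq0
          · obtain ⟨j, -, rfl⟩ := Finset.mem_image.mp hx
            exact hrz j
        · rw [hcard]; omega
      have hs0 := hsign 0
      rw [hqz] at hs0
      simp at hs0
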